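/- Let F_q be a finite field, G an invertible n×n matrix over F_q, and for 0 ≤ i < n let d_i be the minimum Hamming weight of a nonzero vector in the row space of rows i, i+1, …, n−1 of G. For each 0 ≤ i < n let 𝔹_i ⊆ F_q^N be a linear code of dimension K_i whose nonzero codewords all have Hamming weight at least D_i. Let 𝒞 be the image of the linear map sending each tuple (b_0, …, b_{n−1}) ∈ 𝔹_0 × ⋯ × 𝔹_{n−1} to the n×N matrix GᵀB, where B is the n×N matrix whose i-th row is b_i. Then 𝒞 is a linear code of length nN (Hamming weight counted over all nN matrix entries) and dimension Σ_{i=0}^{n−1} K_i, and every nonzero element of 𝒞 has Hamming weight at least min{ d_i·D_i : 0 ≤ i < n, K_i > 0 }. -/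

import Mathlib

open Matrix

lemma hammingNorm_prod_eq {F : Type*} [DecidableEq F] [Zero F] {n N : ℕ}
    (M : Matrix (Fin n) (Fin N) F) :
    hammingNorm (fun p : Fin n × Fin N => M p.1 p.2) =
      ∑ j : Fin N, hammingNorm (fun k => M k j) := by
  classical
  simp only [hammingNorm, Finset.card_filter]
  rw [Fintype.sum_prod_type_right]

/-- The generalized concatenated code construction. `G` is an invertible
`n×n` matrix, `d i` is the minimum Hamming weight of a nonzero vector in the row space of
rows `i, …, n−1` of `G`, and `B i ⊆ F_q^N` is a linear code of dimension `K i` all of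
whose nonzero codewords have weight at least `D i`. The image `𝒞` of
`(b_0, …, b_{n−1}) ↦ Gᵀ·B` is then a linear code of length `nN`, dimension `∑ K i`, and
every nonzero element has Hamming weight at least `min { d i · D i : K i > 0 }`. -/
theorem gcc_dim_and_min_dist {F : Type*} [Field F] [Fintype F] [DecidableEq F] {n N : ℕ}
    (G : Matrix (Fin n) (Fin n) F) (hG : IsUnit G)
    (K D d : Fin n → ℕ)
    (hd : ∀ i : Fin n, d i =
      sInf {w | ∃ v ∈ Submodule.span F {r | ∃ j : Fin n, i ≤ j ∧ r = G j},
        v ≠ 0 ∧ hammingNorm v = w})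
    (B : Fin n → Submodule F (Fin N → F))
    (hK : ∀ i, Module.finrank F (B i) = K i)
    (hD : ∀ i, ∀ b ∈ B i, b ≠ 0 → D i ≤ hammingNorm b) :
    ∃ 𝒞 : Submodule F (Matrix (Fin n) (Fin N) F),
      (𝒞 : Set (Matrix (Fin n) (Fin N) F)) =
        {M | ∃ Bm : Matrix (Fin n) (Fin N) F, (∀ i, Bm i ∈ B i) ∧ M = Gᵀ * Bm} ∧
      Module.finrank F 𝒞 = ∑ i, K i ∧
      ∀ M : Matrix (Fin n) (Fin N) F,
        (∃ Bm : Matrix (Fin n) (Fin N) F, (∀ i, Bm i ∈ B i) ∧ M = Gᵀ * Bm) → M ≠ 0 →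
          sInf {w | ∃ i : Fin n, 0 < K i ∧ w = d i * D i} ≤
            hammingNorm (fun p : Fin n × Fin N => M p.1 p.2) := by
  classical
  letI := hG.invertible
  let L : Matrix (Fin n) (Fin N) F →ₗ[F] Matrix (Fin n) (Fin N) F :=
    { toFun := fun Bm => Gᵀ * Bm
      map_add' := fun x y => Matrix.mul_add _ x y
      map_smul' := fun c x => Matrix.mul_smul _ c x }
  let P : (∀ i : Fin n, B i) →ₗ[F] Matrix (Fin n) (Fin N) F :=
    LinearMap.pi (fun i => (B i).subtype.comp (LinearMap.proj i))
  have hPinj : Function.Injective P := by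
    intro x y h
    funext i
    exact Subtype.ext (congrFun h i)
  have hLinj : Function.Injective L := by
    intro x y h
    have h' : Gᵀ * x = Gᵀ * y := h
    have : ⅟Gᵀ * (Gᵀ * x) = ⅟Gᵀ * (Gᵀ * y) := by rw [h']
    simpa [← Matrix.mul_assoc] using this
  refine ⟨LinearMap.range (L ∘ₗ P), ?_, ?_, ?_⟩
  · ext M
    simp only [SetLike.mem_coe, LinearMap.mem_range, Set.mem_setOf_eq]
    constructor
    · rintro ⟨b, rfl⟩
      exact ⟨P b, fun i => (b i).2, rfl⟩
    · rintro ⟨Bm, hBm, rfl⟩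
      exact ⟨fun i => ⟨Bm i, hBm i⟩, rfl⟩
  · rw [LinearMap.finrank_range_of_inj (by rw [LinearMap.coe_comp]; exact hLinj.comp hPinj), Module.finrank_pi_fintype]
    simp [hK]
  · rintro M ⟨Bm, hBm, rfl⟩ hM0
    have hBm0 : Bm ≠ 0 := by
      rintro rfl
      simp at hM0
    set s : Finset (Fin n) := Finset.univ.filter (fun i => Bm i ≠ 0) with hs
    have hsne : s.Nonempty := by
      rcases Function.ne_iff.1 hBm0 with ⟨i, hi⟩
      exact ⟨i, Finset.mem_filter.2 ⟨Finset.mem_univ _, hi⟩⟩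
    set i₀ := s.min' hsne with hi₀def
    have hi₀ : Bm i₀ ≠ 0 := by
      have := s.min'_mem hsne
      simp only [hs, Finset.mem_filter] at this
      exact this.2
    have hlt : ∀ i, i < i₀ → Bm i = 0 := by
      intro i hi
      by_contra h
      exact absurd (s.min'_le i (by simp [hs, h])) (not_le.2 hi)
    have hKpos : 0 < K i₀ := by
      rw [← hK i₀]
      haveI : Nontrivial (B i₀) :=
        ⟨⟨⟨Bm i₀, hBm i₀⟩, 0, by simpa [Subtype.ext_iff] using hi₀⟩⟩
      exact Module.finrank_pos
    have hcol : ∀ j : Fin N, Bm i₀ j ≠ 0 →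
        d i₀ ≤ hammingNorm (fun k => (Gᵀ * Bm) k j) := by
      intro j hj
      have hv : (fun k => (Gᵀ * Bm) k j) = ∑ i : Fin n, Bm i j • G i := by
        funext k
        simp [Matrix.mul_apply, Matrix.transpose_apply, Finset.sum_apply, mul_comm]
      have hmem : (fun k => (Gᵀ * Bm) k j) ∈
          Submodule.span F {r | ∃ l : Fin n, i₀ ≤ l ∧ r = G l} := by
        rw [hv]
        refine Submodule.sum_mem _ (fun i _ => ?_)
        rcases lt_or_ge i i₀ with h | h
        · simp [hlt i h]
        · exact Submodule.smul_mem _ _ (Submodule.subset_span ⟨i, h, rfl⟩)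
      have hvne : (fun k => (Gᵀ * Bm) k j) ≠ 0 := by
        intro h0
        have hmv : (fun k => (Gᵀ * Bm) k j) = Gᵀ *ᵥ (fun i => Bm i j) := by
          funext k
          simp [Matrix.mul_apply, Matrix.mulVec, dotProduct]
        have : (fun i => Bm i j) = 0 := by
          letI := Matrix.invertibleTranspose G
          apply Matrix.mulVec_injective_of_invertible Gᵀ
          rw [← hmv, h0, Matrix.mulVec_zero]
        exact hj (congrFun this i₀)
      rw [hd i₀]
      exact Nat.sInf_le ⟨_, hmem, hvne, rfl⟩
    calc sInf {w | ∃ i : Fin n, 0 < K i ∧ w = d i * D i}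
        ≤ d i₀ * D i₀ := Nat.sInf_le ⟨i₀, hKpos, rfl⟩
      _ ≤ d i₀ * hammingNorm (Bm i₀) :=
          Nat.mul_le_mul_left _ (hD i₀ _ (hBm i₀) hi₀)
      _ ≤ ∑ j ∈ Finset.univ.filter (fun j => Bm i₀ j ≠ 0),
            hammingNorm (fun k => (Gᵀ * Bm) k j) := by
          rw [mul_comm, hammingNorm]
          have := Finset.card_nsmul_le_sum
            (Finset.univ.filter (fun j => Bm i₀ j ≠ 0))
            (fun j => hammingNorm (fun k => (Gᵀ * Bm) k j)) (d i₀)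
            (fun j hj => hcol j (by simpa using hj))
          simpa [smul_eq_mul] using this
      _ ≤ ∑ j : Fin N, hammingNorm (fun k => (Gᵀ * Bm) k j) :=
          Finset.sum_le_sum_of_subset (Finset.filter_subset _ _)
      _ = hammingNorm (fun p : Fin n × Fin N => (Gᵀ * Bm) p.1 p.2) :=
          (hammingNorm_prod_eq _).symm
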